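/- Fix ε̃ ∈ (0,1]. Given a RochetNet menu M = {(x^(k), p^(k))}_{k∈{0,...,K}}, define the menu M̃ = {(x̃^(k), p̃^(k))}_{k∈{0,...,K}} by x̃^(k)_j = ε̃ ⌊x^(k)_j / ε̃⌋ for every coordinate j and p̃^(k) = (1 − √ε̃) p^(k). Then Rev(M̃) ≥ Rev(M) − 2√ε̃. -/

import Mathlib

open MeasureTheory Finset

namespace RN

/-- A RochetNet menu: for each of the `K+1` option indices, an allocation in `[0,1]^n`
and a price. -/
abbrev Menu (n K : ℕ) := Fin (K + 1) → (Fin n → ℝ) × ℝ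

/-- Inner product of a valuation and an allocation. -/
def dotp {n : ℕ} (v x : Fin n → ℝ) : ℝ := ∑ j, v j * x j

/-- A valid menu: allocations in `[0,1]^n`, nonnegative prices, default option `(0,0)`. -/
def IsMenu {n K : ℕ} (M : Menu n K) : Prop :=
  (∀ k j, 0 ≤ (M k).1 j ∧ (M k).1 j ≤ 1) ∧ (∀ k, 0 ≤ (M k).2) ∧ M 0 = 0

/-- Utility of option `k` for valuation `v`. -/
def util {n K : ℕ} (M : Menu n K) (v : Fin n → ℝ) (k : Fin (K + 1)) : ℝ :=
  dotp v (M k).1 - (M k).2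

/-- Price extracted at valuation `v`: the maximal price among utility-maximizing options. -/
noncomputable def price {n K : ℕ} (M : Menu n K) (v : Fin n → ℝ) : ℝ :=
  sSup {p : ℝ | ∃ k, (∀ k', util M v k' ≤ util M v k) ∧ p = (M k).2}

/-- Option `k` is the buyer's selected option at `v`: it maximizes utility and, among
utility maximizers, has maximal price. -/
def Selected {n K : ℕ} (M : Menu n K) (v : Fin n → ℝ) (k : Fin (K + 1)) : Prop :=
  (∀ k', util M v k' ≤ util M v k) ∧ (M k).2 = price M v

/-- The set of valuations. -/
def V (n : ℕ) : Set (Fin n → ℝ) :=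
  {v | (∀ j, 0 ≤ v j ∧ v j ≤ 1) ∧ ∑ j, v j ≤ 1}

/-- Expected revenue of menu `M` under valuation distribution `F`. -/
noncomputable def Rev {n K : ℕ} (F : Measure (Fin n → ℝ)) (M : Menu n K) : ℝ :=
  ∫ v, price M v ∂F

/-- Option-wise convex combination `lam • M + (1 - lam) • M'` of two menus. -/
noncomputable def comb {n K : ℕ} (lam : ℝ) (M M' : Menu n K) : Menu n K :=
  fun k => (fun j => lam * (M k).1 j + (1 - lam) * (M' k).1 j,
            lam * (M k).2 + (1 - lam) * (M' k).2)

/-- `M` is `ε`-reducible: some subset `K'` of options containing the default option, of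
cardinality at most `√(K+1)`, contains the buyer's selected option with probability
at least `1 - ε`. -/
def Reducible {n K : ℕ} (F : Measure (Fin n → ℝ)) (M : Menu n K) (ε : ℝ) : Prop :=
  ∃ K' : Finset (Fin (K + 1)), 0 ∈ K' ∧ (K'.card : ℝ) ≤ Real.sqrt (K + 1) ∧
    (F {v | ∃ k ∈ K', Selected M v k}).toReal ≥ 1 - ε

/-- `M₁` and `M₂` are `ε`-mode-connected by a piecewise linear path with `pieces` linear
pieces, all whose menus are valid and have revenue at least `min (Rev M₁) (Rev M₂) - ε`. -/
def PLConnected {n K : ℕ} (F : Measure (Fin n → ℝ)) (M₁ M₂ : Menu n K) (ε : ℝ)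
    (pieces : ℕ) : Prop :=
  ∃ P : Fin (pieces + 1) → Menu n K, P 0 = M₁ ∧ P (Fin.last pieces) = M₂ ∧
    (∀ i, IsMenu (P i)) ∧
    ∀ i : Fin pieces, ∀ lam ∈ Set.Icc (0 : ℝ) 1,
      Rev F (comb lam (P i.castSucc) (P i.succ)) ≥ min (Rev F M₁) (Rev F M₂) - ε

/-- The discretized menu: each allocation coordinate is rounded down to a multiple of
`εt` and each price is rescaled by `1 - √εt`. -/
noncomputable def discretize {n K : ℕ} (εt : ℝ) (M : Menu n K) : Menu n K :=
  fun k => (fun j => εt * (⌊(M k).1 j / εt⌋₊ : ℝ), (1 - Real.sqrt εt) * (M k).2)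

lemma exists_selected {n K : ℕ} (M : Menu n K) (v : Fin n → ℝ) : ∃ k, Selected M v k := by
  classical
  obtain ⟨k0, -, hk0⟩ := Finset.exists_max_image Finset.univ (fun k => util M v k)
    ⟨0, Finset.mem_univ 0⟩
  set T := (Finset.univ.filter (fun k => ∀ k', util M v k' ≤ util M v k)).image
    (fun k => (M k).2) with hTdef
  have hTne : T.Nonempty :=
    ⟨(M k0).2, Finset.mem_image.2 ⟨k0, Finset.mem_filter.2
      ⟨Finset.mem_univ _, fun k' => hk0 k' (Finset.mem_univ k')⟩, rfl⟩⟩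
  have hset : {p : ℝ | ∃ k, (∀ k', util M v k' ≤ util M v k) ∧ p = (M k).2} = ↑T := by
    ext p
    constructor
    · rintro ⟨k, hk, rfl⟩
      exact Finset.mem_coe.2 (Finset.mem_image.2 ⟨k, Finset.mem_filter.2
        ⟨Finset.mem_univ _, hk⟩, rfl⟩)
    · intro hp
      obtain ⟨k, hk, rfl⟩ := Finset.mem_image.1 (Finset.mem_coe.1 hp)
      exact ⟨k, (Finset.mem_filter.1 hk).2, rfl⟩
  have hprice : price M v = T.max' hTne := by
    rw [price, hset]; exact hTne.csSup_eq_max'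
  obtain ⟨k, hk, hkp⟩ := Finset.mem_image.1 (T.max'_mem hTne)
  exact ⟨k, (Finset.mem_filter.1 hk).2, by rw [hkp, hprice]⟩

lemma le_price {n K : ℕ} (M : Menu n K) (v : Fin n → ℝ) (k : Fin (K + 1))
    (hk : ∀ k', util M v k' ≤ util M v k) : (M k).2 ≤ price M v := by
  refine le_csSup ⟨(Finset.univ.sup' ⟨0, Finset.mem_univ 0⟩ (fun k => (M k).2) : ℝ), ?_⟩
    ⟨k, hk, rfl⟩
  rintro p ⟨k', -, rfl⟩
  exact Finset.le_sup' (fun k => (M k).2) (Finset.mem_univ k')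

lemma measurable_util {n K : ℕ} (M : Menu n K) (k : Fin (K + 1)) :
    Measurable (fun v : Fin n → ℝ => util M v k) := by
  unfold util dotp
  exact (Finset.measurable_sum _ (fun j _ =>
    (measurable_pi_apply j).mul_const _)).sub measurable_const

lemma measurable_price {n K : ℕ} (M : Menu n K) (hp : ∀ k, 0 ≤ (M k).2) :
    Measurable (fun v => price M v) := by
  classical
  set A : Fin (K + 1) → Set (Fin n → ℝ) :=
    fun k => {w | ∀ k', util M w k' ≤ util M w k} with hA
  have hAm : ∀ k, MeasurableSet (A k) := by
    intro k
    have : A k = ⋂ k', {w | util M w k' ≤ util M w k} := by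
      ext w; simp [hA]
    rw [this]
    exact MeasurableSet.iInter fun k' =>
      measurableSet_le (measurable_util M k') (measurable_util M k)
  have hfun : (fun v => price M v) = fun v =>
      Finset.univ.sup' ⟨0, Finset.mem_univ 0⟩
        (fun k => Set.indicator (A k) (fun _ => (M k).2) v) := by
    funext v
    obtain ⟨ks, hks⟩ := exists_selected M v
    apply le_antisymm
    · rw [← hks.2]
      have h1 : Set.indicator (A ks) (fun _ => (M ks).2) v = (M ks).2 :=
        Set.indicator_of_mem (show v ∈ A ks from hks.1) _
      rw [← h1]
      exact Finset.le_sup' (fun k => Set.indicator (A k) (fun _ => (M k).2) v)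
        (Finset.mem_univ ks)
    · apply Finset.sup'_le
      intro k _
      by_cases hk : v ∈ A k
      · rw [Set.indicator_of_mem hk]
        exact le_price M v k hk
      · rw [Set.indicator_of_notMem hk, ← hks.2]
        exact hp ks
  rw [hfun]
  have heq : (fun v => Finset.univ.sup' ⟨0, Finset.mem_univ 0⟩
      (fun k => Set.indicator (A k) (fun _ => (M k).2) v)) =
      Finset.univ.sup' ⟨0, Finset.mem_univ 0⟩
        (fun k => Set.indicator (A k) (fun _ => (M k).2)) := by
    funext v
    exact (Finset.sup'_apply _ _ v).symm
  rw [heq]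
  exact Finset.measurable_sup' _ (fun k _ => (measurable_const).indicator (hAm k))

lemma price_nonneg {n K : ℕ} (M : Menu n K) (hp : ∀ k, 0 ≤ (M k).2) (v : Fin n → ℝ) :
    0 ≤ price M v := by
  obtain ⟨k, hk⟩ := exists_selected M v
  rw [← hk.2]; exact hp k

lemma price_le_sup {n K : ℕ} (M : Menu n K) (v : Fin n → ℝ) :
    price M v ≤ (Finset.univ.sup' ⟨0, Finset.mem_univ 0⟩ (fun k => (M k).2) : ℝ) := by
  obtain ⟨k, hk⟩ := exists_selected M v
  rw [← hk.2]; exact Finset.le_sup' (fun k => (M k).2) (Finset.mem_univ k)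

lemma integrable_price {n K : ℕ} (F : Measure (Fin n → ℝ)) [IsProbabilityMeasure F]
    (M : Menu n K) (hp : ∀ k, 0 ≤ (M k).2) : Integrable (fun v => price M v) F := by
  refine (integrable_const ((Finset.univ.sup' ⟨0, Finset.mem_univ 0⟩
    (fun k => (M k).2) : ℝ))).mono' ((measurable_price M hp).aestronglyMeasurable)
    (ae_of_all _ fun v => ?_)
  rw [Real.norm_eq_abs, abs_of_nonneg (price_nonneg M hp v)]
  exact price_le_sup M v

lemma key {n K : ℕ} (εt : ℝ) (hε0 : 0 < εt) (hε1 : εt ≤ 1) (M : Menu n K) (hM : IsMenu M)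
    (v : Fin n → ℝ) (hv : v ∈ V n) :
    price M v - 2 * Real.sqrt εt ≤ price (discretize εt M) v := by
  obtain ⟨k, hkmax, hkp⟩ := exists_selected M v
  obtain ⟨k', hk'max, hk'p⟩ := exists_selected (discretize εt M) v
  set s := Real.sqrt εt with hs
  have hs0 : 0 < s := Real.sqrt_pos.2 hε0
  have hs1 : s ≤ 1 := by
    rw [hs, show (1:ℝ) = Real.sqrt 1 by simp]
    exact Real.sqrt_le_sqrt hε1
  have hss : s * s = εt := Real.mul_self_sqrt hε0.le
  have hvnn : ∀ j, 0 ≤ v j := fun j => (hv.1 j).1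
  have hvsum : ∑ j, v j ≤ 1 := hv.2
  have hfl_le : ∀ a : ℝ, 0 ≤ a → εt * (⌊a / εt⌋₊ : ℝ) ≤ a := by
    intro a ha
    have h := Nat.floor_le (div_nonneg ha hε0.le)
    calc εt * (⌊a / εt⌋₊ : ℝ) ≤ εt * (a / εt) :=
          mul_le_mul_of_nonneg_left h hε0.le
      _ = a := by field_simp
  have hfl_ge : ∀ a : ℝ, a - εt ≤ εt * (⌊a / εt⌋₊ : ℝ) := by
    intro a
    have h := Nat.sub_one_lt_floor (a / εt)
    have := mul_lt_mul_of_pos_left h hε0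
    rw [mul_sub, mul_div_cancel₀ _ hε0.ne'] at this
    linarith
  -- h1 : dotp of rounded k ≥ dotp of k minus εt
  have h1 : dotp v (M k).1 - εt ≤ dotp v ((discretize εt M) k).1 := by
    have hterm : ∀ j ∈ Finset.univ, v j * (M k).1 j - v j * εt ≤
        v j * (εt * (⌊(M k).1 j / εt⌋₊ : ℝ)) := by
      intro j _
      have h := hfl_ge ((M k).1 j)
      nlinarith [hvnn j]
    have hsum := Finset.sum_le_sum hterm
    have heq : ∑ j, (v j * (M k).1 j - v j * εt) =
        (∑ j, v j * (M k).1 j) - εt * ∑ j, v j := by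
      rw [Finset.sum_sub_distrib, Finset.mul_sum]
      congr 1
      exact Finset.sum_congr rfl fun j _ => by ring
    rw [heq] at hsum
    have : εt * ∑ j, v j ≤ εt := by nlinarith
    unfold dotp discretize at *
    simp only at hsum ⊢
    linarith
  -- h2 : rounded dotp ≤ dotp, for k'
  have h2 : dotp v ((discretize εt M) k').1 ≤ dotp v (M k').1 := by
    unfold dotp discretize
    refine Finset.sum_le_sum fun j _ => ?_
    exact mul_le_mul_of_nonneg_left (hfl_le ((M k').1 j) (hM.1 k' j).1) (hvnn j)
  have hu1 : dotp v (M k').1 - (M k').2 ≤ dotp v (M k).1 - (M k).2 := hkmax k'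
  have hu2 : dotp v ((discretize εt M) k).1 - (1 - s) * (M k).2 ≤
      dotp v ((discretize εt M) k').1 - (1 - s) * (M k').2 := hk'max k
  have hp0 : 0 ≤ (M k).2 := hM.2.1 k
  have hutil0 : (0:ℝ) ≤ dotp v (M k).1 - (M k).2 := by
    have h0 := hkmax 0
    have : util M v 0 = 0 := by
      simp [util, dotp, hM.2.2]
    rw [this] at h0
    exact h0
  have hdle : dotp v (M k).1 ≤ 1 := by
    have : ∀ j ∈ Finset.univ, v j * (M k).1 j ≤ v j := fun j _ => by
      nlinarith [(hM.1 k j).2, hvnn j]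
    calc dotp v (M k).1 ≤ ∑ j, v j := Finset.sum_le_sum this
      _ ≤ 1 := hvsum
  have hpk1 : (M k).2 ≤ 1 := by linarith
  -- combine to get s * ((M k).2 - s) ≤ s * (M k').2
  have hc : s * ((M k).2 - s) ≤ s * (M k').2 := by nlinarith
  have hpk' : (M k).2 - s ≤ (M k').2 := le_of_mul_le_mul_left hc hs0
  rw [← hkp, ← hk'p]
  show (M k).2 - 2 * s ≤ (1 - s) * (M k').2
  nlinarith [mul_le_mul_of_nonneg_left hpk' (by linarith : (0:ℝ) ≤ 1 - s)]

/-- For `εt ∈ (0,1]`, rounding allocations of `M` down to multiples of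
`εt` and discounting prices by the factor `1 - √εt` loses at most `2√εt` revenue. -/
theorem statement7 {n K : ℕ} (F : Measure (Fin n → ℝ)) [IsProbabilityMeasure F]
    (hFV : F (V n) = 1) (εt : ℝ) (hε0 : 0 < εt) (hε1 : εt ≤ 1)
    (M : Menu n K) (hM : IsMenu M) :
    Rev F (discretize εt M) ≥ Rev F M - 2 * Real.sqrt εt := by
  set s := Real.sqrt εt with hs
  have hs0 : 0 < s := Real.sqrt_pos.2 hε0
  have hs1 : s ≤ 1 := by
    rw [hs, show (1:ℝ) = Real.sqrt 1 by simp]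
    exact Real.sqrt_le_sqrt hε1
  have hMd : ∀ k, 0 ≤ ((discretize εt M) k).2 := fun k =>
    mul_nonneg (by linarith) (hM.2.1 k)
  have hVmeas : MeasurableSet (V n) := by
    have : V n = (⋂ j, {v : Fin n → ℝ | 0 ≤ v j ∧ v j ≤ 1}) ∩
        {v : Fin n → ℝ | ∑ j, v j ≤ 1} := by
      ext v; simp [V, forall_and]
    rw [this]
    refine (MeasurableSet.iInter fun j => ?_).inter
      (measurableSet_le (Finset.measurable_sum _ fun j _ => measurable_pi_apply j)
        measurable_const)
    exact (measurableSet_le measurable_const (measurable_pi_apply j)).inter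
      (measurableSet_le (measurable_pi_apply j) measurable_const)
  have hcompl : F (V n)ᶜ = 0 := by
    rw [measure_compl hVmeas (measure_ne_top F _), hFV, measure_univ, tsub_self]
  have hae : ∀ᵐ v ∂F, price M v - 2 * s ≤ price (discretize εt M) v := by
    refine ae_iff.2 (measure_mono_null (fun v hv => ?_) hcompl)
    intro hvV
    exact hv (key εt hε0 hε1 M hM v hvV)
  have hint1 : Integrable (fun v => price M v) F := integrable_price F M hM.2.1
  have hint2 : Integrable (fun v => price (discretize εt M) v) F :=
    integrable_price F (discretize εt M) hMd
  have hmono := integral_mono_ae (hint1.sub (integrable_const (2 * s))) hint2 hae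
  simp only [Pi.sub_apply] at hmono
  rw [integral_sub hint1 (integrable_const _), integral_const, probReal_univ] at hmono
  simp only [ENNReal.toReal_one, smul_eq_mul, one_mul] at hmono
  unfold Rev
  exact hmono


end RN
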